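/- arXiv:0905.1436 — 4 statements merged into one kernel-verified Lean document; each statement's English description precedes it below -/
import Mathlib

section
/- Let D ⊆ ℂⁿ be an open set contained in {a ∈ ℂⁿ : aᵢ ≠ aⱼ for i ≠ j}, and let B₁,…,Bₙ : D → M₂(ℂ) be holomorphic 2×2-matrix-valued functions satisfying the Schlesinger equations ∂Bᵢ/∂aⱼ = [Bᵢ,Bⱼ]/(aᵢ−aⱼ) for i ≠ j and ∂Bᵢ/∂aᵢ = −∑_{j≠i} [Bᵢ,Bⱼ]/(aᵢ−aⱼ), and suppose that ∑_{i=1}^n Bᵢ(a) = diag(θ,−θ) for all a ∈ D, where θ ∈ ℂ is a constant. Define b(a) = ∑_{i=1}^n aᵢ·(Bᵢ(a))₁₂, where (M)₁₂ denotes the upper-right entry of a 2×2 matrix M. Then for every j = 1,…,n and every a ∈ D one has ∂b/∂aⱼ(a) = (2θ+1)·(Bⱼ(a))₁₂. -/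
attribute [local instance] Matrix.normedAddCommGroup Matrix.normedSpace

/-- Lemma 1 (Gontsov–Vyugin): for a two-dimensional Schlesinger isomonodromic family with
`∑ Bᵢ = diag(θ, -θ)`, the function `b(a) = ∑ aᵢ (Bᵢ(a))₁₂` satisfies
`∂b/∂aⱼ = (2θ+1)(Bⱼ(a))₁₂`. -/
theorem schlesinger_upper_right_differential
    (n : ℕ) (D : Set (Fin n → ℂ)) (hD : IsOpen D)
    (hDdist : ∀ a ∈ D, ∀ i j : Fin n, i ≠ j → a i ≠ a j)
    (B : Fin n → (Fin n → ℂ) → Matrix (Fin 2) (Fin 2) ℂ)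
    (hBdiff : ∀ i, DifferentiableOn ℂ (B i) D)
    (hSch_off : ∀ i j : Fin n, i ≠ j → ∀ a ∈ D,
      fderiv ℂ (B i) a (Pi.single j 1) =
        (a i - a j)⁻¹ • (B i a * B j a - B j a * B i a))
    (hSch_diag : ∀ i : Fin n, ∀ a ∈ D,
      fderiv ℂ (B i) a (Pi.single i 1) =
        -∑ j ∈ Finset.univ.erase i,
          (a i - a j)⁻¹ • (B i a * B j a - B j a * B i a))
    (θ : ℂ)
    (hsum : ∀ a ∈ D, ∑ i, B i a = Matrix.diagonal ![θ, -θ])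
    (b : (Fin n → ℂ) → ℂ)
    (hb : ∀ a, b a = ∑ i, a i * B i a 0 1) :
    ∀ j : Fin n, ∀ a ∈ D,
      fderiv ℂ b a (Pi.single j 1) = (2 * θ + 1) * B j a 0 1 := by
  intro j a ha
  have hmem : D ∈ nhds a := hD.mem_nhds ha
  have hBd : ∀ i, DifferentiableAt ℂ (B i) a := fun i => (hBdiff i a ha).differentiableAt hmem
  set L : Matrix (Fin 2) (Fin 2) ℂ →L[ℂ] ℂ :=
    (ContinuousLinearMap.proj (R := ℂ) (φ := fun _ : Fin 2 => ℂ) 1).comp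
      (ContinuousLinearMap.proj (R := ℂ) (φ := fun _ : Fin 2 => Fin 2 → ℂ) 0) with hLdef
  have hterm : ∀ i : Fin n, HasFDerivAt (fun x : Fin n → ℂ => x i * B i x 0 1)
      ((a i) • (L.comp (fderiv ℂ (B i) a))
        + (B i a 0 1) • (ContinuousLinearMap.proj (R := ℂ) (φ := fun _ : Fin n => ℂ) i)) a := by
    intro i
    have h1 : HasFDerivAt (fun x : Fin n → ℂ => x i)
        (ContinuousLinearMap.proj (R := ℂ) (φ := fun _ : Fin n => ℂ) i) a :=
      hasFDerivAt_apply i a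
    have h2 : HasFDerivAt (fun x => B i x 0 1) (L.comp (fderiv ℂ (B i) a)) a :=
      L.hasFDerivAt.comp a (hBd i).hasFDerivAt
    exact h1.mul h2
  have hbfun : b = fun x : Fin n → ℂ => ∑ i, x i * B i x 0 1 := funext hb
  have hbd : HasFDerivAt b
      (∑ i, ((a i) • (L.comp (fderiv ℂ (B i) a))
        + (B i a 0 1) • (ContinuousLinearMap.proj (R := ℂ) (φ := fun _ : Fin n => ℂ) i))) a := by
    rw [hbfun]
    exact HasFDerivAt.fun_sum (fun i _ => hterm i)
  rw [hbd.fderiv]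
  rw [ContinuousLinearMap.sum_apply]
  -- abbreviations
  set d : Fin n → ℂ := fun i => (fderiv ℂ (B i) a (Pi.single j 1)) 0 1 with hd
  have happ : ∀ i, (((a i) • (L.comp (fderiv ℂ (B i) a))
        + (B i a 0 1) • (ContinuousLinearMap.proj (R := ℂ) (φ := fun _ : Fin n => ℂ) i))) (Pi.single j 1)
      = (if i = j then 1 else 0) * B i a 0 1 + a i * d i := by
    intro i
    have hLa : ∀ M : Matrix (Fin 2) (Fin 2) ℂ, L M = M 0 1 := fun _ => rfl
    simp only [ContinuousLinearMap.add_apply, ContinuousLinearMap.coe_smul',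
      Pi.smul_apply, ContinuousLinearMap.proj_apply, ContinuousLinearMap.coe_comp',
      Function.comp_apply, hLa, Pi.single_apply, smul_eq_mul, hd]
    ring
  rw [Finset.sum_congr rfl (fun i _ => happ i)]
  rw [Finset.sum_add_distrib]
  have h1 : (∑ i, (if i = j then 1 else 0) * B i a 0 1) = B j a 0 1 := by
    simp [Finset.sum_ite_eq]
  rw [h1]
  -- the commutator entries
  set C : Fin n → ℂ := fun i => (B i a * B j a - B j a * B i a) 0 1 with hC
  have hdoff : ∀ i ∈ Finset.univ.erase j, d i = (a i - a j)⁻¹ * C i := by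
    intro i hi
    have hij := Finset.ne_of_mem_erase hi
    rw [hd]
    simp only [hSch_off i j hij a ha, Matrix.smul_apply, smul_eq_mul, hC]
  have hdj : a j * d j = ∑ i ∈ Finset.univ.erase j, -(a j * ((a i - a j)⁻¹ * C i)) := by
    rw [hd]
    simp only [hSch_diag j a ha]
    rw [Matrix.neg_apply, Matrix.sum_apply]
    rw [← Finset.sum_neg_distrib, Finset.mul_sum]
    refine Finset.sum_congr rfl (fun i hi => ?_)
    have hij := (Finset.ne_of_mem_erase hi).symm
    have hne : a i - a j ≠ 0 := sub_ne_zero.mpr (hDdist a ha i j (fun h => hij h.symm))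
    have hne' : a j - a i ≠ 0 := sub_ne_zero.mpr (hDdist a ha j i hij)
    simp only [Matrix.smul_apply, smul_eq_mul, hC, Matrix.sub_apply]
    field_simp
    ring
  have h2 : (∑ i, a i * d i) = ∑ i ∈ Finset.univ.erase j, C i := by
    rw [← Finset.add_sum_erase _ _ (Finset.mem_univ j), hdj, ← Finset.sum_add_distrib]
    refine Finset.sum_congr rfl (fun i hi => ?_)
    have hij := Finset.ne_of_mem_erase hi
    have hne : a i - a j ≠ 0 := sub_ne_zero.mpr (hDdist a ha i j hij)
    rw [hdoff i hi]
    field_simp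
    ring
  rw [h2]
  have h3 : (∑ i ∈ Finset.univ.erase j, C i)
      = ((∑ i, B i a) * B j a - B j a * ∑ i, B i a) 0 1 := by
    have : (∑ i, (B i a * B j a - B j a * B i a)) 0 1
        = ((∑ i, B i a) * B j a - B j a * ∑ i, B i a) 0 1 := by
      rw [Finset.sum_sub_distrib, ← Finset.sum_mul, ← Finset.mul_sum]
    rw [← this, ← Finset.add_sum_erase _ _ (Finset.mem_univ j)]
    rw [Matrix.add_apply, Matrix.sum_apply]
    simp [hC]
  rw [h3, hsum a ha]
  rw [Matrix.sub_apply, Matrix.diagonal_mul, Matrix.mul_diagonal]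
  simp only [Matrix.cons_val_zero, Matrix.cons_val_one, Matrix.head_cons]
  ring
end

section
/- Fix n ≥ 1 and set a_{n+1} = 0, a_{n+2} = 1. Let D ⊆ (ℂ∖{0,1})ⁿ be an open set contained in {a : aᵢ ≠ aⱼ for i ≠ j}, and let B₁,…,B_{n+2} : D → M₂(ℂ) be holomorphic 2×2-matrix-valued functions of a = (a₁,…,aₙ) satisfying the Schlesinger equations with two fixed points: ∂Bᵢ/∂aⱼ = [Bᵢ,Bⱼ]/(aᵢ−aⱼ) for all i ∈ {1,…,n+2}, j ∈ {1,…,n} with i ≠ j, and ∂Bⱼ/∂aⱼ = −∑_{l=1,…,n+2, l≠j} [Bⱼ,B_l]/(aⱼ−a_l) for j ∈ {1,…,n}. Suppose ∑_{i=1}^{n+2} Bᵢ(a) = diag(θ,−θ) for all a ∈ D, where θ ∈ ℂ is a constant. Define b(a) = ∑_{i=1}^{n+2} aᵢ·(Bᵢ(a))₁₂ = ∑_{i=1}^{n} aᵢ·(Bᵢ(a))₁₂ + (B_{n+2}(a))₁₂. Then for every j = 1,…,n and a ∈ D one has ∂b/∂aⱼ(a) = (2θ+1)·(Bⱼ(a))₁₂.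 -/
attribute [local instance] Matrix.normedAddCommGroup Matrix.normedSpace

/-- The `n+2` singular points: the moving points `a₁, …, aₙ` together with the
fixed points `a_{n+1} = 0` and `a_{n+2} = 1`. -/
noncomputable def extPts (n : ℕ) (a : Fin n → ℂ) : Fin (n + 2) → ℂ :=
  fun i => if h : (i : ℕ) < n then a ⟨i, h⟩ else if (i : ℕ) = n then 0 else 1

/-- Extraction of the `(0,1)` entry of a `2×2` matrix, as a continuous linear map. -/
noncomputable def entry01 : Matrix (Fin 2) (Fin 2) ℂ →L[ℂ] ℂ :=
  LinearMap.toContinuousLinearMap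
    { toFun := fun M => M 0 1
      map_add' := fun _ _ => rfl
      map_smul' := fun _ _ => rfl }

@[simp] lemma entry01_apply (M : Matrix (Fin 2) (Fin 2) ℂ) : entry01 M = M 0 1 := rfl

/-- Lemma 1 for Garnier-type isomonodromic families: with the two fixed singular points
`0` and `1`, if `∑_{i=1}^{n+2} Bᵢ = diag(θ,-θ)`, then the function
`b(a) = ∑ᵢ aᵢ (Bᵢ(a))₁₂` satisfies `∂b/∂aⱼ = (2θ+1)(Bⱼ(a))₁₂`. -/
theorem schlesinger_upper_right_differential_fixed_points
    (n : ℕ) (hn : 1 ≤ n) (D : Set (Fin n → ℂ)) (hD : IsOpen D)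
    (hD01 : ∀ a ∈ D, ∀ i : Fin n, a i ≠ 0 ∧ a i ≠ 1)
    (hDdist : ∀ a ∈ D, ∀ i j : Fin (n + 2), i ≠ j → extPts n a i ≠ extPts n a j)
    (B : Fin (n + 2) → (Fin n → ℂ) → Matrix (Fin 2) (Fin 2) ℂ)
    (hBdiff : ∀ i, DifferentiableOn ℂ (B i) D)
    (hSch_off : ∀ (i : Fin (n + 2)) (j : Fin n), i ≠ Fin.castAdd 2 j → ∀ a ∈ D,
      fderiv ℂ (B i) a (Pi.single j 1) =
        (extPts n a i - a j)⁻¹ •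
          (B i a * B (Fin.castAdd 2 j) a - B (Fin.castAdd 2 j) a * B i a))
    (hSch_diag : ∀ j : Fin n, ∀ a ∈ D,
      fderiv ℂ (B (Fin.castAdd 2 j)) a (Pi.single j 1) =
        -∑ l ∈ Finset.univ.erase (Fin.castAdd 2 j),
          (a j - extPts n a l)⁻¹ •
            (B (Fin.castAdd 2 j) a * B l a - B l a * B (Fin.castAdd 2 j) a))
    (θ : ℂ)
    (hsum : ∀ a ∈ D, ∑ i, B i a = Matrix.diagonal ![θ, -θ])
    (b : (Fin n → ℂ) → ℂ)
    (hb : ∀ a, b a = ∑ i, extPts n a i * B i a 0 1) :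
    ∀ j : Fin n, ∀ a ∈ D,
      fderiv ℂ b a (Pi.single j 1) = (2 * θ + 1) * B (Fin.castAdd 2 j) a 0 1 := by
  intro j a ha
  set J : Fin (n + 2) := Fin.castAdd 2 j with hJdef
  have hJn : ((J : Fin (n + 2)) : ℕ) < n := by simpa [hJdef] using j.isLt
  have heJ : extPts n a J = a j := by
    simp [extPts, hJn, hJdef]
  -- differentiability
  have hBd : ∀ i, DifferentiableAt ℂ (B i) a := fun i =>
    (hBdiff i).differentiableAt (hD.mem_nhds ha)
  set F : Fin (n + 2) → (Fin n → ℂ) →L[ℂ] Matrix (Fin 2) (Fin 2) ℂ :=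
    fun i => fderiv ℂ (B i) a with hFdef
  have hBF : ∀ i, HasFDerivAt (B i) (F i) a := fun i => (hBd i).hasFDerivAt
  -- derivatives of the coordinate functions
  set L : Fin (n + 2) → (Fin n → ℂ) →L[ℂ] ℂ :=
    fun i => if h : (i : ℕ) < n then
      ContinuousLinearMap.proj (R := ℂ) (φ := fun _ : Fin n => ℂ) ⟨i, h⟩ else 0 with hLdef
  have hE : ∀ i, HasFDerivAt (fun x => extPts n x i) (L i) a := by
    intro i
    by_cases h : (i : ℕ) < n
    · simp only [extPts, dif_pos h, hLdef]
      exact hasFDerivAt_apply _ _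
    · simp only [extPts, dif_neg h, hLdef]
      exact hasFDerivAt_const _ _
  -- derivative of b
  have hbf : b = fun x => ∑ i, extPts n x i * B i x 0 1 := funext hb
  have hder : HasFDerivAt b
      (∑ i, ((extPts n a i) • (entry01.comp (F i)) + (B i a 0 1) • (L i))) a := by
    rw [hbf]
    refine HasFDerivAt.fun_sum fun i _ => ?_
    have h2 : HasFDerivAt (fun x => B i x 0 1) (entry01.comp (F i)) a :=
      entry01.hasFDerivAt.comp a (hBF i)
    exact (hE i).mul h2
  rw [hder.fderiv]
  set v : Fin n → ℂ := Pi.single j 1 with hvdef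
  -- value of L i on v
  have hLv : ∀ i, L i v = if i = J then 1 else 0 := by
    intro i
    by_cases h : (i : ℕ) < n
    · have : (⟨(i : ℕ), h⟩ : Fin n) = j ↔ i = J := by
        constructor
        · intro hh
          apply Fin.ext
          simpa [hJdef] using congrArg Fin.val hh
        · intro hh
          apply Fin.ext
          simpa [hJdef] using congrArg Fin.val hh
      simp [hLdef, h, hvdef, Pi.single_apply, this]
    · have : i ≠ J := by
        intro hh; exact h (hh ▸ hJn)
      simp [hLdef, h, this]
  simp only [ContinuousLinearMap.sum_apply, ContinuousLinearMap.add_apply,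
    ContinuousLinearMap.smul_apply, ContinuousLinearMap.coe_comp', Function.comp_apply,
    entry01_apply, smul_eq_mul]
  rw [Finset.sum_add_distrib]
  have hsum2 : ∑ i, B i a 0 1 * L i v = B J a 0 1 := by
    rw [Finset.sum_congr rfl fun i _ => by rw [hLv i]]
    simp [Finset.sum_ite_eq']
  rw [hsum2]
  -- the main sum
  have hSdiag : (F J v) 0 1 =
      -∑ l ∈ Finset.univ.erase J, (a j - extPts n a l)⁻¹ *
        ((B J a * B l a - B l a * B J a) 0 1) := by
    rw [hFdef]
    show (fderiv ℂ (B J) a (Pi.single j 1)) 0 1 = _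
    rw [hJdef, hSch_diag j a ha, Matrix.neg_apply, Matrix.sum_apply, neg_inj]
    exact Finset.sum_congr rfl fun l _ => by rw [Matrix.smul_apply, smul_eq_mul]
  have hSmain : ∑ i, extPts n a i * (F i v) 0 1 = 2 * θ * B J a 0 1 := by
    rw [← Finset.sum_erase_add Finset.univ _ (Finset.mem_univ J)]
    have hterm : ∀ i ∈ Finset.univ.erase J,
        extPts n a i * (F i v) 0 1 = (B i a * B J a - B J a * B i a) 0 1 +
          a j * ((a j - extPts n a i)⁻¹ * ((B J a * B i a - B i a * B J a) 0 1)) := by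
      intro i hi
      have hiJ : i ≠ J := Finset.ne_of_mem_erase hi
      have hne : extPts n a i ≠ a j := by
        have := hDdist a ha i J hiJ
        rwa [heJ] at this
      have hF : (F i v) 0 1 = (extPts n a i - a j)⁻¹ *
          ((B i a * B J a - B J a * B i a) 0 1) := by
        rw [hFdef]
        show (fderiv ℂ (B i) a (Pi.single j 1)) 0 1 = _
        rw [hSch_off i j (hJdef ▸ hiJ) a ha]
        simp [Matrix.smul_apply, smul_eq_mul, hJdef]
      rw [hF]
      have h1 : extPts n a i - a j ≠ 0 := sub_ne_zero.mpr hne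
      have h2 : a j - extPts n a i ≠ 0 := sub_ne_zero.mpr (Ne.symm hne)
      have hanti : (B J a * B i a - B i a * B J a) 0 1 =
          -((B i a * B J a - B J a * B i a) 0 1) := by
        simp [Matrix.sub_apply]
      rw [hanti]
      field_simp
      ring
    rw [Finset.sum_congr rfl hterm, Finset.sum_add_distrib, ← Finset.mul_sum,
      heJ, hSdiag, mul_neg, add_neg_cancel_right]
    have hzero : (B J a * B J a - B J a * B J a) 0 1 = 0 := by simp
    have hfull : ∑ i ∈ Finset.univ.erase J, (B i a * B J a - B J a * B i a) 0 1
        = ∑ i, (B i a * B J a - B J a * B i a) 0 1 :=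
      Finset.sum_erase _ hzero
    rw [hfull]
    have hcomm : ∑ i, (B i a * B J a - B J a * B i a) 0 1 = 2 * θ * B J a 0 1 := by
      have : ∑ i, (B i a * B J a - B J a * B i a) =
          (∑ i, B i a) * B J a - B J a * ∑ i, B i a := by
        rw [Finset.sum_sub_distrib, ← Finset.sum_mul, ← Finset.mul_sum]
      rw [← Matrix.sum_apply, this, hsum a ha]
      simp [Matrix.sub_apply, Matrix.diagonal_mul, Matrix.mul_diagonal]
      ring
    rw [hcomm]
  rw [hSmain]
  ring
end

section
/- Let D ⊆ ℂ∖{0,1} be an open set and let B₁, B₂, B₃ : D → M₂(ℂ) be holomorphic 2×2-matrix-valued functions of t satisfying the Schlesinger equations dB₁/dt = −[B₁,B₂]/t − [B₁,B₃]/(t−1), dB₂/dt = [B₁,B₂]/t, dB₃/dt = [B₁,B₃]/(t−1), with B₁(t)+B₂(t)+B₃(t) = diag(θ,−θ) for a constant θ ∈ ℂ satisfying 2θ+1 ≠ 0. Write b_k(t) = (B_k(t))₁₂ and let g(t) = t·b₁(t) + b₃(t). Suppose t₀ ∈ D is a point with g(t₀) = 0 and (b₁(t₀), b₂(t₀), b₃(t₀))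 ≠ (0,0,0). Then g'(t₀) ≠ 0, i.e. t₀ is a simple zero of g; consequently the function u(t) = −t·b₂(t)/g(t) has at most a simple pole at t₀, i.e. (t−t₀)·u(t) extends holomorphically to t₀. -/
open scoped Topology

attribute [local instance] Matrix.normedAddCommGroup Matrix.normedSpace

/-- Simplicity of movable poles of Painlevé VI solutions in the case `α ≠ 0`:
a zero `t₀` of `g(t) = t b₁(t) + b₃(t)` at which not all `bᵢ` vanish is simple, so
`u(t) = -t b₂(t)/g(t)` has at most a simple pole at `t₀`. -/
theorem zero_of_g_is_simple
    (D : Set ℂ) (hD : IsOpen D) (hD01 : ∀ t ∈ D, t ≠ 0 ∧ t ≠ 1)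
    (B1 B2 B3 : ℂ → Matrix (Fin 2) (Fin 2) ℂ)
    (hB1 : DifferentiableOn ℂ B1 D) (hB2 : DifferentiableOn ℂ B2 D)
    (hB3 : DifferentiableOn ℂ B3 D)
    (hS1 : ∀ t ∈ D, deriv B1 t =
      -(t⁻¹ • (B1 t * B2 t - B2 t * B1 t)) - (t - 1)⁻¹ • (B1 t * B3 t - B3 t * B1 t))
    (hS2 : ∀ t ∈ D, deriv B2 t = t⁻¹ • (B1 t * B2 t - B2 t * B1 t))
    (hS3 : ∀ t ∈ D, deriv B3 t = (t - 1)⁻¹ • (B1 t * B3 t - B3 t * B1 t))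
    (θ : ℂ) (hθ : 2 * θ + 1 ≠ 0)
    (hsum : ∀ t ∈ D, B1 t + B2 t + B3 t = Matrix.diagonal ![θ, -θ])
    (b1 b2 b3 g : ℂ → ℂ)
    (hb1 : ∀ t, b1 t = B1 t 0 1) (hb2 : ∀ t, b2 t = B2 t 0 1)
    (hb3 : ∀ t, b3 t = B3 t 0 1)
    (hg : ∀ t, g t = t * b1 t + b3 t)
    (t0 : ℂ) (ht0 : t0 ∈ D) (hg0 : g t0 = 0)
    (hnz : ¬(b1 t0 = 0 ∧ b2 t0 = 0 ∧ b3 t0 = 0)) :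
    deriv g t0 ≠ 0 ∧
      ∃ h : ℂ → ℂ, AnalyticAt ℂ h t0 ∧
        ∀ᶠ t in 𝓝[≠] t0, h t = (t - t0) * (-(t * b2 t) / g t) := by
  obtain ⟨ht00, ht01⟩ := hD01 t0 ht0
  have ht01' : t0 - 1 ≠ 0 := sub_ne_zero.2 ht01
  have hDnhds : D ∈ 𝓝 t0 := hD.mem_nhds ht0
  -- entry extraction CLM
  let L : Matrix (Fin 2) (Fin 2) ℂ →L[ℂ] ℂ :=
    (ContinuousLinearMap.proj (R := ℂ) (φ := fun _ : Fin 2 => ℂ) 1).comp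
      (ContinuousLinearMap.proj (R := ℂ) (φ := fun _ : Fin 2 => (Fin 2 → ℂ)) 0)
  have hL : ∀ M : Matrix (Fin 2) (Fin 2) ℂ, L M = M 0 1 := fun M => rfl
  have hgfun : g = fun t => t * b1 t + b3 t := funext hg
  -- sum of entries is zero at t0
  have hsum01 : b1 t0 + b2 t0 + b3 t0 = 0 := by
    have := congrFun (congrFun (hsum t0 ht0) 0) 1
    simp only [Matrix.add_apply] at this
    rw [hb1, hb2, hb3, this]
    simp [Matrix.diagonal]
  -- b1 t0 ≠ 0
  have hb1ne : b1 t0 ≠ 0 := by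
    intro h0
    have h3 : b3 t0 = 0 := by
      have := hg t0; rw [hg0, h0] at this; linear_combination -this
    have h2 : b2 t0 = 0 := by linear_combination hsum01 - h0 - h3
    exact hnz ⟨h0, h2, h3⟩
  -- derivatives of the entry functions
  have hB1' : HasDerivAt B1 (deriv B1 t0) t0 :=
    (hB1.differentiableAt hDnhds).hasDerivAt
  have hB3' : HasDerivAt B3 (deriv B3 t0) t0 :=
    (hB3.differentiableAt hDnhds).hasDerivAt
  have hb1d : HasDerivAt b1 ((deriv B1 t0) 0 1) t0 := by
    have := L.hasFDerivAt.comp_hasDerivAt t0 hB1'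
    have e : b1 = ⇑L ∘ B1 := funext fun t => by rw [hb1]; rfl
    rw [e]; exact this
  have hb3d : HasDerivAt b3 ((deriv B3 t0) 0 1) t0 := by
    have := L.hasFDerivAt.comp_hasDerivAt t0 hB3'
    have e : b3 = ⇑L ∘ B3 := funext fun t => by rw [hb3]; rfl
    rw [e]; exact this
  have hgd : HasDerivAt g (1 * b1 t0 + t0 * ((deriv B1 t0) 0 1) + (deriv B3 t0) 0 1) t0 := by
    rw [hgfun]
    exact ((hasDerivAt_id t0).mul hb1d).add hb3d
  -- entries of the commutators
  set cA := B1 t0 * B2 t0 - B2 t0 * B1 t0 with hcA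
  set cB := B1 t0 * B3 t0 - B3 t0 * B1 t0 with hcB
  have hkey : cA 0 1 + cB 0 1 = -(2 * θ) * b1 t0 := by
    have hmat : cA + cB = B1 t0 * Matrix.diagonal ![θ, -θ]
        - Matrix.diagonal ![θ, -θ] * B1 t0 := by
      rw [hcA, hcB, ← hsum t0 ht0]; noncomm_ring
    have := congrFun (congrFun hmat 0) 1
    simp only [Matrix.add_apply, Matrix.sub_apply, Matrix.mul_apply, Fin.sum_univ_two,
      Matrix.diagonal_apply, hb1] at this ⊢
    rw [this]
    simp
    ring
  -- compute deriv g t0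
  have hderivg : deriv g t0 = (2 * θ + 1) * b1 t0 := by
    rw [hgd.deriv, hS1 t0 ht0, hS3 t0 ht0]
    simp only [Matrix.sub_apply, Matrix.neg_apply, Matrix.smul_apply, smul_eq_mul, ← hcA, ← hcB]
    field_simp
    linear_combination (1 - t0) * hkey
  have hderivne : deriv g t0 ≠ 0 := by
    rw [hderivg]; exact mul_ne_zero hθ hb1ne
  refine ⟨hderivne, ?_⟩
  -- analyticity
  have hb2an : AnalyticAt ℂ b2 t0 := by
    have : DifferentiableOn ℂ (L ∘ B2) D := L.differentiable.comp_differentiableOn hB2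
    have h2 : DifferentiableOn ℂ b2 D := by
      convert this using 1; exact funext fun t => by rw [hb2]; rfl
    exact h2.analyticAt hDnhds
  have hb1do : DifferentiableOn ℂ b1 D := by
    have : DifferentiableOn ℂ (L ∘ B1) D := L.differentiable.comp_differentiableOn hB1
    convert this using 1; exact funext fun t => by rw [hb1]; rfl
  have hb3do : DifferentiableOn ℂ b3 D := by
    have : DifferentiableOn ℂ (L ∘ B3) D := L.differentiable.comp_differentiableOn hB3
    convert this using 1; exact funext fun t => by rw [hb3]; rfl
  have hgan : AnalyticAt ℂ g t0 := by
    have : DifferentiableOn ℂ g D := by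
      rw [hgfun]; exact (differentiableOn_id.mul hb1do).add hb3do
    exact this.analyticAt hDnhds
  obtain ⟨p, hp⟩ := hgan
  set k := dslope g t0 with hk
  have hkan : AnalyticAt ℂ k t0 := (hp.has_fpower_series_dslope_fslope).analyticAt
  have hkt0 : k t0 ≠ 0 := by
    rw [hk, dslope_same]; exact hderivne
  refine ⟨fun t => -(t * b2 t) / k t, ((analyticAt_id.mul hb2an).neg).div hkan hkt0, ?_⟩
  have hkev : ∀ᶠ t in 𝓝 t0, k t ≠ 0 := hkan.continuousAt.eventually_ne hkt0
  filter_upwards [self_mem_nhdsWithin, eventually_nhdsWithin_of_eventually_nhds hkev]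
    with t htne hkne
  have htne' : t - t0 ≠ 0 := sub_ne_zero.2 htne
  have hgt : g t = (t - t0) * k t := by
    have := sub_smul_dslope g t0 t
    rw [hg0, sub_zero, smul_eq_mul] at this
    exact this.symm
  rw [hgt]
  field_simp
end

section
/- Let n ≥ 0, let a₁,…,a_{n+2} ∈ ℂ and b₁,…,b_{n+2} ∈ ℂ with ∑_{i=1}^{n+2} bᵢ = 0, and define the polynomial P(z) = ∑_{i=1}^{n+2} bᵢ·∏_{j≠i}(z−aⱼ). Then P has degree at most n (the coefficient of z^{n+1} vanishes), and for every k = 0,1,…,n the coefficient of z^{n−k} in P equals (−1)^k · ∑_{S} (∑_{i∈S} bᵢ)·(∏_{i∈S} aᵢ), where the sum is over all subsets S ⊆ {1,…,n+2} of cardinality k+1. In particular the coefficient of zⁿ equals ∑_{i=1}^{n+2} bᵢaᵢ. -/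
open Polynomial

lemma coeff_prod_X_sub_C_finset {σ : Type*} (s : Finset σ) (r : σ → ℂ) {m : ℕ}
    (h : m ≤ s.card) :
    (∏ i ∈ s, (X - C (r i))).coeff m =
      (-1 : ℂ) ^ (s.card - m) * ∑ t ∈ s.powersetCard (s.card - m), ∏ i ∈ t, r i := by
  simp_rw [sub_eq_add_neg, ← C_neg]
  rw [Finset.prod_X_add_C_coeff _ _ h, Finset.mul_sum]
  refine Finset.sum_congr rfl fun t ht => ?_
  have hc : t.card = s.card - m := (Finset.mem_powersetCard.mp ht).2
  rw [← hc]
  have hn : ∀ j ∈ t, -r j = -1 * r j := fun j _ => by ring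
  rw [Finset.prod_congr rfl hn, Finset.prod_mul_distrib, Finset.prod_const]

/-- Coefficients of the polynomial `P(z) = ∑ᵢ bᵢ ∏_{j≠i} (z - aⱼ)` with `∑ bᵢ = 0`:
the leading coefficient vanishes, and the coefficient of `z^{n-k}` equals
`(-1)^k ∑_{|S| = k+1} (∑_{i∈S} bᵢ)(∏_{i∈S} aᵢ)`. -/
theorem coefficients_of_upper_right_polynomial
    (n : ℕ) (a b : Fin (n + 2) → ℂ) (hb : ∑ i, b i = 0)
    (P : ℂ[X])
    (hP : P = ∑ i, C (b i) * ∏ j ∈ Finset.univ.erase i, (X - C (a j))) :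
    P.coeff (n + 1) = 0 ∧ P.degree ≤ n ∧
      (∀ k : ℕ, k ≤ n →
        P.coeff (n - k) =
          (-1 : ℂ) ^ k *
            ∑ S ∈ Finset.powersetCard (k + 1) (Finset.univ : Finset (Fin (n + 2))),
              (∑ i ∈ S, b i) * ∏ i ∈ S, a i) ∧
      P.coeff n = ∑ i, b i * a i := by
  have hcard : ∀ i : Fin (n + 2), (Finset.univ.erase i).card = n + 1 := by
    intro i
    rw [Finset.card_erase_of_mem (Finset.mem_univ i), Finset.card_univ, Fintype.card_fin]
    omega
  -- coefficient of z^(n+1) vanishes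
  have h1 : P.coeff (n + 1) = 0 := by
    rw [hP, Polynomial.finset_sum_coeff]
    simp_rw [Polynomial.coeff_C_mul]
    have : ∀ i : Fin (n + 2),
        (∏ j ∈ Finset.univ.erase i, (X - C (a j))).coeff (n + 1) = 1 := by
      intro i
      rw [coeff_prod_X_sub_C_finset _ _ (le_of_eq (hcard i).symm), hcard i]
      simp
    simp_rw [this, mul_one]
    exact hb
  -- general coefficient formula
  have h3 : ∀ k : ℕ, k ≤ n →
      P.coeff (n - k) =
        (-1 : ℂ) ^ k *
          ∑ S ∈ Finset.powersetCard (k + 1) (Finset.univ : Finset (Fin (n + 2))),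
            (∑ i ∈ S, b i) * ∏ i ∈ S, a i := by
    intro k hk
    rw [hP, Polynomial.finset_sum_coeff]
    simp_rw [Polynomial.coeff_C_mul]
    have hstep : ∀ i : Fin (n + 2),
        (∏ j ∈ Finset.univ.erase i, (X - C (a j))).coeff (n - k) =
          (-1 : ℂ) ^ (k + 1) *
            ∑ t ∈ (Finset.univ.erase i).powersetCard (k + 1), ∏ j ∈ t, a j := by
      intro i
      have hle : n - k ≤ (Finset.univ.erase i).card := by rw [hcard i]; omega
      have hsub : (Finset.univ.erase i).card - (n - k) = k + 1 := by rw [hcard i]; omega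
      rw [coeff_prod_X_sub_C_finset _ _ hle, hsub]
    simp_rw [hstep]
    have hfilter : ∀ i : Fin (n + 2),
        (Finset.univ.erase i).powersetCard (k + 1) =
          (Finset.powersetCard (k + 1) (Finset.univ : Finset (Fin (n + 2)))).filter
            (fun T => i ∉ T) := by
      intro i
      ext T
      simp only [Finset.mem_powersetCard, Finset.mem_filter, Finset.subset_erase]
      tauto
    simp_rw [hfilter]
    -- swap sums
    calc ∑ i, b i * ((-1 : ℂ) ^ (k + 1) *
            ∑ T ∈ (Finset.powersetCard (k + 1) (Finset.univ : Finset (Fin (n + 2)))).filter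
              (fun T => i ∉ T), ∏ j ∈ T, a j)
        = (-1 : ℂ) ^ (k + 1) * ∑ i, ∑ T ∈ Finset.powersetCard (k + 1)
            (Finset.univ : Finset (Fin (n + 2))),
            if i ∉ T then b i * ∏ j ∈ T, a j else 0 := by
          rw [Finset.mul_sum]
          refine Finset.sum_congr rfl fun i _ => ?_
          rw [Finset.sum_filter, Finset.mul_sum, Finset.mul_sum, Finset.mul_sum]
          refine Finset.sum_congr rfl fun T _ => ?_
          split <;> ring
      _ = (-1 : ℂ) ^ (k + 1) * ∑ T ∈ Finset.powersetCard (k + 1)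
            (Finset.univ : Finset (Fin (n + 2))),
            (∑ i ∈ Tᶜ, b i) * ∏ j ∈ T, a j := by
          rw [Finset.sum_comm]
          congr 1
          refine Finset.sum_congr rfl fun T _ => ?_
          rw [Finset.sum_mul, ← Finset.sum_filter]
          exact Finset.sum_congr (by ext x; simp) fun _ _ => rfl
      _ = (-1 : ℂ) ^ k *
            ∑ S ∈ Finset.powersetCard (k + 1) (Finset.univ : Finset (Fin (n + 2))),
              (∑ i ∈ S, b i) * ∏ i ∈ S, a i := by
          have hcompl : ∀ T : Finset (Fin (n + 2)), (∑ i ∈ Tᶜ, b i) = -∑ i ∈ T, b i := by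
            intro T
            have := Finset.sum_compl_add_sum T b
            rw [hb] at this
            linear_combination this
          simp_rw [hcompl]
          rw [Finset.mul_sum, Finset.mul_sum]
          refine Finset.sum_congr rfl fun T _ => ?_
          ring
  refine ⟨h1, ?_, h3, ?_⟩
  · -- degree ≤ n
    rw [Polynomial.degree_le_iff_coeff_zero]
    intro m hm
    rcases Nat.lt_or_ge m (n + 2) with hm2 | hm2
    · have hmn : m = n + 1 := by
        have : (n : WithBot ℕ) < (m : WithBot ℕ) := hm
        have := Nat.cast_lt (α := WithBot ℕ) |>.mp this
        omega
      rw [hmn]; exact h1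
    · rw [hP, Polynomial.finset_sum_coeff]
      refine Finset.sum_eq_zero fun i _ => ?_
      rw [Polynomial.coeff_C_mul]
      have hdeg : (∏ j ∈ Finset.univ.erase i, (X - C (a j))).natDegree = n + 1 := by
        rw [Polynomial.natDegree_prod _ _ (fun j _ => X_sub_C_ne_zero (a j))]
        simp [Polynomial.natDegree_X_sub_C, hcard i]
      rw [Polynomial.coeff_eq_zero_of_natDegree_lt (by omega), mul_zero]
  · -- coefficient of z^n
    have := h3 0 (Nat.zero_le n)
    simp only [Nat.sub_zero, pow_zero, one_mul] at this
    rw [this, Finset.powersetCard_one, Finset.sum_map]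
    simp
end
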